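/- arXiv:2411.06432 — 3 statements merged into one kernel-verified Lean document; each statement's English description precedes it below -/
import Mathlib

section
/- Let X be a skeletally small additive category and 𝕏 = (X --f--> Y --g--> Z) a diagram in X. Define Ω_𝕏 = { M ∈ Mod-X : Ker(M(g)) ⊆ Im(M(f)) } and Γ_𝕏 = { N ∈ Mod-X^op : Ker(N(f)) ⊆ Im(N(g)) }. Then the assignment sending a definable subcategory D = ⋂_λ Ω_{𝕏_λ} of Mod-X to D̄ = ⋂_λ Γ_{𝕏_λ} of Mod-X^op is well defined (independent of the choice of defining family) and is a bijection between definable subcategories of Mod-X and definable subcategories of Mod-X^op. -/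
open CategoryTheory CategoryTheory.Limits Opposite

universe u

variable {C : Type u} [SmallCategory C] [Preadditive C]

/-- For a diagram `𝕏 = (X --f--> Y --g--> Z)` in `X`:
`Ω_𝕏 = { M ∈ Mod-X : Ker(M(g)) ⊆ Im(M(f)) }`. -/
def Omega {X Y Z : C} (f : X ⟶ Y) (g : Y ⟶ Z) (M : C ⥤ AddCommGrpCat.{u}) : Prop :=
  ∀ y : M.obj Y, M.map g y = 0 → ∃ x : M.obj X, M.map f x = y

/-- For a diagram `𝕏 = (X --f--> Y --g--> Z)` in `X`:
`Γ_𝕏 = { N ∈ Mod-X^op : Ker(N(f)) ⊆ Im(N(g)) }`. -/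
def Gamma {X Y Z : C} (f : X ⟶ Y) (g : Y ⟶ Z) (N : Cᵒᵖ ⥤ AddCommGrpCat.{u}) : Prop :=
  ∀ y : N.obj (op Y), N.map f.op y = 0 → ∃ z : N.obj (op Z), N.map g.op z = y

/-- A family of diagrams in `C`, indexed by `Λ`. -/
structure DiagramFamily (C : Type u) [SmallCategory C] where
  Λ : Type u
  X : Λ → C
  Y : Λ → C
  Z : Λ → C
  f : ∀ l, X l ⟶ Y l
  g : ∀ l, Y l ⟶ Z l

/-- The definable subcategory of `Mod-X` cut out by a family of diagrams. -/
def omegaSet (𝒳 : DiagramFamily C) : Set (C ⥤ AddCommGrpCat.{u}) :=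
  {M | M.Additive ∧ ∀ l, Omega (𝒳.f l) (𝒳.g l) M}

/-- The definable subcategory of `Mod-X^op` cut out by a family of diagrams. -/
def gammaSet (𝒳 : DiagramFamily C) : Set (Cᵒᵖ ⥤ AddCommGrpCat.{u}) :=
  {N | N.Additive ∧ ∀ l, Gamma (𝒳.f l) (𝒳.g l) N}

abbrev D0 := AddCircle (1:ℚ)

lemma sep {A : Type u} [AddCommGroup A] (S : AddSubgroup A) (y : A) (hy : y ∉ S) :
    ∃ ψ : A →+ D0, (∀ s ∈ S, ψ s = 0) ∧ ψ y ≠ 0 := by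
  have h0 : (QuotientAddGroup.mk' S) y ≠ 0 := by
    simpa [QuotientAddGroup.eq_zero_iff] using hy
  obtain ⟨c, hc⟩ := CharacterModule.exists_character_apply_ne_zero_of_ne_zero h0
  exact ⟨(show A ⧸ S →+ D0 from c).comp (QuotientAddGroup.mk' S), fun s hs => by
    show c (QuotientAddGroup.mk' S s) = 0
    simp [(QuotientAddGroup.eq_zero_iff s).2 hs], hc⟩

lemma factor {A B : Type u} [AddCommGroup A] [AddCommGroup B] (h : A →+ B)
    (ψ : A →+ D0) (hker : ∀ a, h a = 0 → ψ a = 0) :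
    ∃ φ : B →+ D0, ∀ a, φ (h a) = ψ a := by
  have hle : h.ker ≤ ψ.ker := fun a ha => hker a ha
  let ψ' : (A ⧸ h.ker) →+ D0 := QuotientAddGroup.lift _ ψ hle
  let e : (A ⧸ h.ker) ≃+ h.range := QuotientAddGroup.quotientKerEquivRange h
  let χ : (h.range : AddSubgroup B) →+ D0 := ψ'.comp (e.symm : h.range →+ (A ⧸ h.ker))
  obtain ⟨φ, hφ⟩ := CharacterModule.dual_surjective_of_injective
    (h.range.subtype.toIntLinearMap) (Subtype.val_injective) χ
  refine ⟨φ, fun a => ?_⟩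
  have : (show B →+ D0 from φ) ((h.range.subtype) ⟨h a, ⟨a, rfl⟩⟩) = χ ⟨h a, ⟨a, rfl⟩⟩ :=
    congrFun (congrArg (fun (m : CharacterModule _) => ⇑m) hφ) _
  simp only [AddSubgroup.coe_subtype] at this
  rw [this]
  show ψ' (e.symm ⟨h a, ⟨a, rfl⟩⟩) = ψ a
  have he : e ((QuotientAddGroup.mk a : A ⧸ h.ker)) = ⟨h a, ⟨a, rfl⟩⟩ := rfl
  rw [← he, AddEquiv.symm_apply_apply]
  rfl

def Ndual (N : Cᵒᵖ ⥤ AddCommGrpCat.{u}) : C ⥤ AddCommGrpCat.{u} where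
  obj A := AddCommGrpCat.of (N.obj (op A) →+ D0)
  map {A B} f := AddCommGrpCat.ofHom
    { toFun := fun ψ => ψ.comp (N.map f.op).hom
      map_zero' := AddMonoidHom.zero_comp _
      map_add' := fun a b => AddMonoidHom.add_comp _ _ _ }
  map_id A := by
    ext ψ : 2
    show AddMonoidHom.comp ψ (N.map (𝟙 (op A))).hom = ψ
    rw [N.map_id]; rfl
  map_comp {A B B'} f f' := by
    ext ψ : 2
    show AddMonoidHom.comp ψ (N.map ((f ≫ f').op)).hom
        = AddMonoidHom.comp (AddMonoidHom.comp ψ (N.map f.op).hom) (N.map f'.op).hom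
    rw [op_comp, N.map_comp]; rfl

def Mdual (M : C ⥤ AddCommGrpCat.{u}) : Cᵒᵖ ⥤ AddCommGrpCat.{u} where
  obj A := AddCommGrpCat.of (M.obj (unop A) →+ D0)
  map {A B} h := AddCommGrpCat.ofHom
    { toFun := fun ψ => ψ.comp (M.map h.unop).hom
      map_zero' := AddMonoidHom.zero_comp _
      map_add' := fun a b => AddMonoidHom.add_comp _ _ _ }
  map_id A := by
    ext ψ : 2
    show AddMonoidHom.comp ψ (M.map (𝟙 (unop A))).hom = ψ
    rw [M.map_id]; rfl
  map_comp {A B B'} f f' := by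
    ext ψ : 2
    show AddMonoidHom.comp ψ (M.map ((f ≫ f').unop)).hom
        = AddMonoidHom.comp (AddMonoidHom.comp ψ (M.map f.unop).hom) (M.map f'.unop).hom
    rw [unop_comp, M.map_comp]; rfl

lemma ndual_additive {N : Cᵒᵖ ⥤ AddCommGrpCat.{u}} (hN : N.Additive) : (Ndual N).Additive := by
  constructor
  intro A B f f'
  ext ψ
  show AddMonoidHom.comp ψ (N.map ((f + f').op)).hom
      = AddMonoidHom.comp ψ (N.map f.op).hom + AddMonoidHom.comp ψ (N.map f'.op).hom
  rw [op_add, hN.map_add]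
  ext x
  exact AddMonoidHom.map_add ψ ((N.map f.op).hom x) ((N.map f'.op).hom x)

lemma mdual_additive {M : C ⥤ AddCommGrpCat.{u}} (hM : M.Additive) : (Mdual M).Additive := by
  constructor
  intro A B f f'
  ext ψ
  show AddMonoidHom.comp ψ (M.map ((f + f').unop)).hom
      = AddMonoidHom.comp ψ (M.map f.unop).hom + AddMonoidHom.comp ψ (M.map f'.unop).hom
  rw [unop_add, hM.map_add]
  ext x
  exact AddMonoidHom.map_add ψ ((M.map f.unop).hom x) ((M.map f'.unop).hom x)

lemma gamma_iff_omega_ndual {X Y Z : C} (f : X ⟶ Y) (g : Y ⟶ Z) (N : Cᵒᵖ ⥤ AddCommGrpCat.{u}) :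
    Gamma f g N ↔ Omega f g (Ndual N) := by
  constructor
  · intro hG ψ hψ
    have hψ' : AddMonoidHom.comp (show N.obj (op Y) →+ D0 from ψ) (N.map g.op).hom = 0 := hψ
    have hker : ∀ a, (N.map f.op).hom a = 0 → (show N.obj (op Y) →+ D0 from ψ) a = 0 := by
      intro a ha
      obtain ⟨z, hz⟩ := hG a ha
      have := DFunLike.congr_fun hψ' z
      rwa [AddMonoidHom.comp_apply, hz] at this
    obtain ⟨φ, hφ⟩ := factor (A := N.obj (op Y)) (B := N.obj (op X)) (N.map f.op).hom
      (show N.obj (op Y) →+ D0 from ψ) hker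
    refine ⟨φ, ?_⟩
    show AddMonoidHom.comp φ (N.map f.op).hom = ψ
    ext a
    exact hφ a
  · intro hO y hy
    by_contra hc
    push_neg at hc
    have hy' : y ∉ AddMonoidHom.range
        (show N.obj (op Z) →+ N.obj (op Y) from (N.map g.op).hom) := by
      rintro ⟨z, hz⟩
      exact hc z hz
    obtain ⟨ψ, hψ0, hψy⟩ := sep _ y hy'
    have h1 : (Ndual N).map g (show (Ndual N).obj Y from ψ) = 0 := by
      show AddMonoidHom.comp ψ (N.map g.op).hom = 0
      ext z
      exact hψ0 _ ⟨z, rfl⟩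
    obtain ⟨φ, hφ⟩ := hO ψ h1
    have hφ' : AddMonoidHom.comp (show N.obj (op X) →+ D0 from φ) (N.map f.op).hom = ψ := hφ
    have := DFunLike.congr_fun hφ' y
    rw [AddMonoidHom.comp_apply, hy, map_zero] at this
    exact hψy this.symm

lemma omega_iff_gamma_mdual {X Y Z : C} (f : X ⟶ Y) (g : Y ⟶ Z) (M : C ⥤ AddCommGrpCat.{u}) :
    Omega f g M ↔ Gamma f g (Mdual M) := by
  constructor
  · intro hO ψ hψ
    have hψ' : AddMonoidHom.comp (show M.obj Y →+ D0 from ψ) (M.map f).hom = 0 := hψ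
    have hker : ∀ a, (M.map g).hom a = 0 → (show M.obj Y →+ D0 from ψ) a = 0 := by
      intro a ha
      obtain ⟨x, hx⟩ := hO a ha
      have := DFunLike.congr_fun hψ' x
      rwa [AddMonoidHom.comp_apply, hx] at this
    obtain ⟨φ, hφ⟩ := factor (A := M.obj Y) (B := M.obj Z) (M.map g).hom
      (show M.obj Y →+ D0 from ψ) hker
    refine ⟨φ, ?_⟩
    show AddMonoidHom.comp φ (M.map g).hom = ψ
    ext a
    exact hφ a
  · intro hG y hy
    by_contra hc
    push_neg at hc
    have hy' : y ∉ AddMonoidHom.range (show M.obj X →+ M.obj Y from (M.map f).hom) := by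
      rintro ⟨x, hx⟩
      exact hc x hx
    obtain ⟨ψ, hψ0, hψy⟩ := sep _ y hy'
    have h1 : (Mdual M).map f.op (show (Mdual M).obj (op Y) from ψ) = 0 := by
      show AddMonoidHom.comp ψ (M.map f).hom = 0
      ext x
      exact hψ0 _ ⟨x, rfl⟩
    obtain ⟨φ, hφ⟩ := hG ψ h1
    have hφ' : AddMonoidHom.comp (show M.obj Z →+ D0 from φ) (M.map g).hom = ψ := hφ
    have := DFunLike.congr_fun hφ' y
    rw [AddMonoidHom.comp_apply, hy, map_zero] at this
    exact hψy this.symm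

def Phi0 (D : Set (C ⥤ AddCommGrpCat.{u})) : Set (Cᵒᵖ ⥤ AddCommGrpCat.{u}) :=
  {N | N.Additive ∧ ∀ ⦃X Y Z : C⦄ (f : X ⟶ Y) (g : Y ⟶ Z),
      (∀ M ∈ D, Omega f g M) → Gamma f g N}

def Psi0 (D' : Set (Cᵒᵖ ⥤ AddCommGrpCat.{u})) : Set (C ⥤ AddCommGrpCat.{u}) :=
  {M | M.Additive ∧ ∀ ⦃X Y Z : C⦄ (f : X ⟶ Y) (g : Y ⟶ Z),
      (∀ N ∈ D', Gamma f g N) → Omega f g M}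

lemma Phi0_omegaSet (𝒳 : DiagramFamily C) : Phi0 (omegaSet 𝒳) = gammaSet 𝒳 := by
  ext N
  constructor
  · rintro ⟨hAdd, h⟩
    exact ⟨hAdd, fun l => h _ _ (fun M hM => hM.2 l)⟩
  · rintro ⟨hAdd, h⟩
    refine ⟨hAdd, fun X Y Z f g H => ?_⟩
    have hmem : Ndual N ∈ omegaSet 𝒳 :=
      ⟨ndual_additive hAdd, fun l => (gamma_iff_omega_ndual _ _ N).1 (h l)⟩
    exact (gamma_iff_omega_ndual f g N).2 (H _ hmem)

lemma Psi0_gammaSet (𝒳 : DiagramFamily C) : Psi0 (gammaSet 𝒳) = omegaSet 𝒳 := by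
  ext M
  constructor
  · rintro ⟨hAdd, h⟩
    exact ⟨hAdd, fun l => h _ _ (fun N hN => hN.2 l)⟩
  · rintro ⟨hAdd, h⟩
    refine ⟨hAdd, fun X Y Z f g H => ?_⟩
    have hmem : Mdual M ∈ gammaSet 𝒳 :=
      ⟨mdual_additive hAdd, fun l => (omega_iff_gamma_mdual _ _ M).1 (h l)⟩
    exact (omega_iff_gamma_mdual f g M).2 (H _ hmem)

/-- Theorem 4.5: the assignment `⋂_λ Ω_{𝕏_λ} ↦ ⋂_λ Γ_{𝕏_λ}` is
well defined (independent of the choice of defining family of diagrams) and gives a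
bijection between definable subcategories of `Mod-X` and definable subcategories of
`Mod-X^op`. -/
theorem definable_duality_bijection :
    ∃ Φ : Set (C ⥤ AddCommGrpCat.{u}) → Set (Cᵒᵖ ⥤ AddCommGrpCat.{u}),
      (∀ 𝒳 : DiagramFamily C, Φ (omegaSet 𝒳) = gammaSet 𝒳) ∧
      Set.BijOn Φ {D | ∃ 𝒳 : DiagramFamily C, D = omegaSet 𝒳}
        {D' | ∃ 𝒳 : DiagramFamily C, D' = gammaSet 𝒳} := by
  refine ⟨Phi0, Phi0_omegaSet, ?_, ?_, ?_⟩
  · rintro D ⟨𝒳, rfl⟩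
    exact ⟨𝒳, (Phi0_omegaSet 𝒳)⟩
  · rintro D1 ⟨𝒳, rfl⟩ D2 ⟨𝒴, rfl⟩ h
    have h2 : Psi0 (Phi0 (omegaSet 𝒳)) = Psi0 (Phi0 (omegaSet 𝒴)) := by rw [h]
    rwa [Phi0_omegaSet, Phi0_omegaSet, Psi0_gammaSet, Psi0_gammaSet] at h2
  · rintro D' ⟨𝒳, rfl⟩
    exact ⟨omegaSet 𝒳, ⟨𝒳, rfl⟩, Phi0_omegaSet 𝒳⟩
end

section
/- Let X be a skeletally small exact category. Then the subcategory Ex-X of Mod-X consisting of additive functors M : X → Ab that are exact (i.e. send every admissible short exact sequence 0 → A → B → C → 0 in X to an exact sequence of abelian groups 0 → M(A) → M(B) → M(C) → 0) is a definable subcategory of Mod-X. -/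
open CategoryTheory CategoryTheory.Limits

universe u

variable {C : Type u} [SmallCategory C] [Preadditive C]

/-- A kernel-cokernel pair `A --i--> B --p--> C` in `C`; the admissible short exact
sequences of an exact structure on `C` are (a class of) such pairs. -/
structure AdmissibleSES (C : Type u) [SmallCategory C] [Preadditive C] where
  A : C
  B : C
  Cc : C
  i : A ⟶ B
  p : B ⟶ Cc
  w : i ≫ p = 0
  isKer : Nonempty (IsLimit (KernelFork.ofι i w))
  isCoker : Nonempty (IsColimit (CokernelCofork.ofπ p w))

/-- Pure monomorphisms in `Mod-X`. -/
def IsPureMono {M N : C ⥤ AddCommGrpCat.{u}} (h : M ⟶ N) : Prop :=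
  Mono h ∧ ∀ {X Y : C} (u : X ⟶ Y) (m : M.obj Y),
    (∃ n : N.obj X, N.map u n = h.app Y m) → ∃ m' : M.obj X, M.map u m' = m

/-- A class `D` of objects of `Mod-X` is definable if it consists of additive functors and
is closed under direct products, direct limits and pure subobjects. -/
def IsDefinable (D : Set (C ⥤ AddCommGrpCat.{u})) : Prop :=
  (∀ M ∈ D, M.Additive) ∧
  (∀ {ι : Type u} (M : ι → C ⥤ AddCommGrpCat.{u}), (∀ i, M i ∈ D) →
    ∀ (P : C ⥤ AddCommGrpCat.{u}), P.Additive → ∀ (π : ∀ i, P ⟶ M i),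
      Nonempty (IsLimit (Fan.mk P π)) → P ∈ D) ∧
  (∀ {J : Type u} [SmallCategory J] [IsFiltered J] (F : J ⥤ C ⥤ AddCommGrpCat.{u}),
    (∀ j, F.obj j ∈ D) → ∀ (c : Cocone F), c.pt.Additive → IsColimit c → c.pt ∈ D) ∧
  (∀ (M N : C ⥤ AddCommGrpCat.{u}) (h : M ⟶ N), M.Additive → IsPureMono h → N ∈ D → M ∈ D)

/-- An additive functor kills the composite of a kernel-cokernel pair. -/
lemma additive_comp_zero (M : C ⥤ AddCommGrpCat.{u}) (hM : M.Additive) (S : AdmissibleSES C)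
    (x : M.obj S.A) : M.map S.p (M.map S.i x) = 0 := by
  have h : M.map S.i ≫ M.map S.p = 0 := by
    rw [← M.map_comp, S.w]
    exact M.map_zero _ _
  have := congrArg (fun f : M.obj S.A ⟶ M.obj S.Cc => f x) h
  simpa using this

/-- Joint injectivity / surjectivity of the legs of a product in `Mod-X`, pointwise. -/
lemma fan_pointwise {ι : Type u} (M : ι → C ⥤ AddCommGrpCat.{u}) (P : C ⥤ AddCommGrpCat.{u})
    (π : ∀ i, P ⟶ M i) (hP : IsLimit (Fan.mk P π)) (X : C) :
    (∀ x y : P.obj X, (∀ i, (π i).app X x = (π i).app X y) → x = y) ∧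
    (∀ m : ∀ i, (M i).obj X, ∃ x : P.obj X, ∀ i, (π i).app X x = m i) := by
  have h1 := isLimitOfPreserves ((evaluation C AddCommGrpCat.{u}).obj X) hP
  have h2 := isLimitOfPreserves (forget AddCommGrpCat.{u}) h1
  set D := (Discrete.functor M ⋙ (evaluation C AddCommGrpCat.{u}).obj X) ⋙ forget AddCommGrpCat.{u} with hD
  set c := (forget AddCommGrpCat.{u}).mapCone (((evaluation C AddCommGrpCat.{u}).obj X).mapCone (Fan.mk P π)) with hc
  have hleg : ∀ (i : ι) (x : P.obj X), c.π.app ⟨i⟩ x = (π i).app X x := fun i x => rfl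
  constructor
  · intro x y hxy
    apply (Types.isLimitEquivSections h2).injective
    ext j
    show c.π.app j x = c.π.app j y
    rw [hleg j.as, hleg j.as]
    exact hxy j.as
  · intro m
    have hsec : (fun (j : Discrete ι) => m j.as) ∈ D.sections := by
      rintro ⟨j⟩ ⟨j'⟩ f
      obtain rfl : j = j' := f.down.down
      rw [Subsingleton.elim f (𝟙 _)]
      simp
    refine ⟨(Types.isLimitEquivSections h2).symm ⟨_, hsec⟩, fun i => ?_⟩
    exact Types.isLimitEquivSections_symm_apply h2 ⟨_, hsec⟩ ⟨i⟩

/-- Pointwise description of a filtered colimit in `Mod-X`. -/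
lemma filtered_pointwise {J : Type u} [SmallCategory J] [IsFiltered J] (F : J ⥤ C ⥤ AddCommGrpCat.{u})
    (c : Cocone F) (hc : IsColimit c) (X : C) :
    (∀ x : c.pt.obj X, ∃ (j : J) (y : (F.obj j).obj X), (c.ι.app j).app X y = x) ∧
    (∀ (j : J) (y : (F.obj j).obj X), (c.ι.app j).app X y = 0 →
      ∃ (k : J) (f : j ⟶ k), (F.map f).app X y = 0) := by
  have h1 := isColimitOfPreserves ((evaluation C AddCommGrpCat.{u}).obj X) hc
  have h2 := isColimitOfPreserves (forget AddCommGrpCat.{u}) h1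
  set c2 := (forget AddCommGrpCat.{u}).mapCocone (((evaluation C AddCommGrpCat.{u}).obj X).mapCocone c) with hc2
  constructor
  · intro x
    obtain ⟨j, y, hy⟩ := Types.jointly_surjective _ h2 x
    exact ⟨j, y, hy⟩
  · intro j y hy
    have h0 : c2.ι.app j y = c2.ι.app j 0 := by
      show (c.ι.app j).app X y = (c.ι.app j).app X 0
      rw [hy, map_zero]
    rw [Types.FilteredColimit.isColimit_eq_iff _ h2] at h0
    obtain ⟨k, f, g, hfg⟩ := h0
    refine ⟨k, f, ?_⟩
    have hz : ((F ⋙ (evaluation C AddCommGrpCat.{u}).obj X) ⋙ forget AddCommGrpCat.{u}).map g (0 : (F.obj j).obj X) = 0 := by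
      show (F.map g).app X 0 = 0
      rw [map_zero]
    replace hfg := hfg.trans hz
    exact hfg

/-- for a skeletally small exact category `X` (an additive category
equipped with a class `E` of admissible short exact sequences, i.e. kernel-cokernel pairs),
the subcategory `Ex-X` of `Mod-X` consisting of those additive functors `M` sending every
admissible short exact sequence `0 → A → B → C → 0` to an exact sequence
`0 → M(A) → M(B) → M(C) → 0` of abelian groups is definable. -/
theorem ex_definable (E : Set (AdmissibleSES C)) :
    IsDefinable {M : C ⥤ AddCommGrpCat.{u} | M.Additive ∧ ∀ S ∈ E,
      Function.Injective (M.map S.i) ∧ Function.Exact (M.map S.i) (M.map S.p) ∧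
      Function.Surjective (M.map S.p)} := by
  refine ⟨fun M hM => hM.1, ?_, ?_, ?_⟩
  · -- products
    rintro ι M hM P hPadd π ⟨hP⟩
    refine ⟨hPadd, fun S hS => ?_⟩
    obtain ⟨hinjA, hexA⟩ := fan_pointwise M P π hP S.A
    obtain ⟨hinjB, hexB⟩ := fan_pointwise M P π hP S.B
    obtain ⟨hinjC, hexC⟩ := fan_pointwise M P π hP S.Cc
    have nat : ∀ (i : ι) {X Y : C} (u : X ⟶ Y) (x : P.obj X),
        (π i).app Y (P.map u x) = (M i).map u ((π i).app X x) := by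
      intro i X Y u x
      rw [← comp_apply, (π i).naturality, comp_apply]
    refine ⟨?_, ?_, ?_⟩
    · -- injectivity
      intro x y hxy
      apply hinjA
      intro i
      apply (hM i).2 S hS |>.1
      rw [← nat i S.i x, ← nat i S.i y, hxy]
    · -- exactness
      intro x
      constructor
      · intro hx
        have : ∀ i, ∃ a : (M i).obj S.A, (M i).map S.i a = (π i).app S.B x := by
          intro i
          apply ((hM i).2 S hS).2.1 ((π i).app S.B x) |>.mp
          rw [← nat i S.p x, hx, map_zero]
        choose a ha using this
        obtain ⟨z, hz⟩ := hexA a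
        refine ⟨z, hinjB _ _ fun i => ?_⟩
        rw [nat i S.i z, hz i, ha i]
      · rintro ⟨y, rfl⟩
        exact additive_comp_zero P hPadd S y
    · -- surjectivity
      intro y
      have : ∀ i, ∃ b : (M i).obj S.B, (M i).map S.p b = (π i).app S.Cc y :=
        fun i => ((hM i).2 S hS).2.2 ((π i).app S.Cc y)
      choose b hb using this
      obtain ⟨x, hx⟩ := hexB b
      refine ⟨x, hinjC _ _ fun i => ?_⟩
      rw [nat i S.p x, hx i, hb i]
  · -- filtered colimits
    intro J _ _ F hF c hcadd hc
    refine ⟨hcadd, fun S hS => ?_⟩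
    obtain ⟨hsurjA, hkerA⟩ := filtered_pointwise F c hc S.A
    obtain ⟨hsurjB, hkerB⟩ := filtered_pointwise F c hc S.B
    obtain ⟨hsurjC, hkerC⟩ := filtered_pointwise F c hc S.Cc
    have nat : ∀ (j : J) {X Y : C} (u : X ⟶ Y) (x : (F.obj j).obj X),
        (c.ι.app j).app Y ((F.obj j).map u x) = c.pt.map u ((c.ι.app j).app X x) := by
      intro j X Y u x
      rw [← comp_apply, (c.ι.app j).naturality, comp_apply]
      rfl
    have natF : ∀ {j k : J} (f : j ⟶ k) {X Y : C} (u : X ⟶ Y) (x : (F.obj j).obj X),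
        (F.map f).app Y ((F.obj j).map u x) = (F.obj k).map u ((F.map f).app X x) := by
      intro j k f X Y u x
      rw [← comp_apply, (F.map f).naturality, comp_apply]
    have natι : ∀ {j k : J} (f : j ⟶ k) {X : C} (x : (F.obj j).obj X),
        (c.ι.app k).app X ((F.map f).app X x) = (c.ι.app j).app X x := by
      intro j k f X x
      have h := congrArg (fun g : F.obj j ⟶ c.pt => g.app X x) (c.w f)
      simp only at h
      rw [← comp_apply, ← NatTrans.comp_app]
      exact h
    refine ⟨?_, ?_, ?_⟩
    · -- injectivity
      have : ∀ x : c.pt.obj S.A, c.pt.map S.i x = 0 → x = 0 := by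
        intro x hx
        obtain ⟨j, y, rfl⟩ := hsurjA x
        have hy : (c.ι.app j).app S.B ((F.obj j).map S.i y) = 0 := by rw [nat j S.i y, hx]
        obtain ⟨k, f, hf⟩ := hkerB j _ hy
        rw [natF f S.i y] at hf
        have : (F.map f).app S.A y = 0 := (hF k).2 S hS |>.1 (by rw [hf, map_zero])
        rw [← natι f y, this, map_zero]
      intro x y hxy
      have h0 : c.pt.map S.i (x - y) = 0 := by rw [map_sub, hxy, sub_self]
      have := this _ h0
      rwa [sub_eq_zero] at this
    · -- exactness
      intro x
      constructor
      · intro hx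
        obtain ⟨j, y, rfl⟩ := hsurjB x
        have hy : (c.ι.app j).app S.Cc ((F.obj j).map S.p y) = 0 := by rw [nat j S.p y, hx]
        obtain ⟨k, f, hf⟩ := hkerC j _ hy
        rw [natF f S.p y] at hf
        obtain ⟨a, ha⟩ := ((hF k).2 S hS).2.1 ((F.map f).app S.B y) |>.mp hf
        refine ⟨(c.ι.app k).app S.A a, ?_⟩
        rw [← nat k S.i a, ha, natι f y]
      · rintro ⟨y, rfl⟩
        exact additive_comp_zero c.pt hcadd S y
    · -- surjectivity
      intro x
      obtain ⟨j, y, rfl⟩ := hsurjC x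
      obtain ⟨b, hb⟩ := ((hF j).2 S hS).2.2 y
      exact ⟨(c.ι.app j).app S.B b, by rw [← nat j S.p b, hb]⟩
  · -- pure subobjects
    intro M N h hMadd ⟨hmono, hpure⟩ hN
    have happinj : ∀ X : C, Function.Injective (h.app X) := by
      intro X
      have : Mono (h.app X) := (NatTrans.mono_iff_mono_app h).mp hmono X
      exact (AddCommGrpCat.mono_iff_injective _).mp this
    have nat : ∀ {X Y : C} (u : X ⟶ Y) (x : M.obj X),
        h.app Y (M.map u x) = N.map u (h.app X x) := by
      intro X Y u x
      rw [← comp_apply, h.naturality, comp_apply]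
    refine ⟨hMadd, fun S hS => ⟨?_, ?_, ?_⟩⟩
    · -- injectivity
      intro x y hxy
      apply happinj S.A
      apply (hN.2 S hS).1
      rw [← nat S.i x, ← nat S.i y, hxy]
    · -- exactness
      intro x
      constructor
      · intro hx
        have h0 : N.map S.p (h.app S.B x) = 0 := by rw [← nat S.p x, hx, map_zero]
        obtain ⟨n, hn⟩ := (hN.2 S hS).2.1 (h.app S.B x) |>.mp h0
        exact hpure S.i x ⟨n, hn⟩
      · rintro ⟨y, rfl⟩
        exact additive_comp_zero M hMadd S y
    · -- surjectivity
      intro y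
      obtain ⟨n, hn⟩ := (hN.2 S hS).2.2 (h.app S.Cc y)
      exact hpure S.p y ⟨n, hn⟩
end

section
/- Let X be a skeletally small exact category. Then the subcategory Lex-X of Mod-X consisting of left exact additive functors M : X → Ab (those sending each admissible short exact sequence 0 → A → B → C to an exact sequence 0 → M(A) → M(B) → M(C)) is definable, i.e. closed under products, direct limits and pure subobjects. -/
open CategoryTheory CategoryTheory.Limits

universe u

variable {C : Type u} [SmallCategory C] [Preadditive C]

/-- Joint injectivity of the projections of a limit fan in `Type u`. -/
lemma fan_sections_inj {ι : Type u} {F : Discrete ι ⥤ Type u} {c : Cone F}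
    (hc : IsLimit c) {x y : c.pt} (h : ∀ i : ι, c.π.app ⟨i⟩ x = c.π.app ⟨i⟩ y) : x = y := by
  apply (Types.isLimitEquivSections hc).injective
  apply Subtype.ext
  funext j
  obtain ⟨i⟩ := j
  simpa only [Types.isLimitEquivSections_apply] using h i

/-- Joint surjectivity ("lifting of families") for a limit fan in `Type u`. -/
lemma fan_sections_lift {ι : Type u} {F : Discrete ι ⥤ Type u} {c : Cone F}
    (hc : IsLimit c) (a : ∀ i : ι, F.obj ⟨i⟩) : ∃ x : c.pt, ∀ i, c.π.app ⟨i⟩ x = a i := by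
  have hsec : ∀ ⦃j j' : Discrete ι⦄ (f : j ⟶ j'),
      F.map f (a j.as) = a j'.as := by
    rintro ⟨i⟩ ⟨i'⟩ f
    obtain rfl : i = i' := f.down.down
    have : f = 𝟙 _ := Subsingleton.elim _ _
    rw [this, F.map_id]
    rfl
  refine ⟨(Types.isLimitEquivSections hc).symm ⟨fun j => a j.as, fun {j j'} f => hsec f⟩,
    fun i => ?_⟩
  rw [Types.isLimitEquivSections_symm_apply]

/-- `M(i) ≫ M(p) = 0` elementwise, for an additive functor. -/
lemma lex_comp_zero (M : C ⥤ AddCommGrpCat.{u}) (hM : M.Additive) (S : AdmissibleSES C)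
    (y : M.obj S.A) : M.map S.p (M.map S.i y) = 0 := by
  haveI := hM
  rw [← comp_apply, ← M.map_comp, S.w, M.map_zero]
  rfl

omit [Preadditive C] in
/-- Elementwise naturality, stated with the default coercions. -/
lemma natapp {M N : C ⥤ AddCommGrpCat.{u}} (φ : M ⟶ N) {X Y : C} (f : X ⟶ Y) (z : M.obj X) :
    φ.app Y (M.map f z) = N.map f (φ.app X z) :=
  NatTrans.naturality_apply φ f z

/-- Morphisms of abelian groups preserve zero, stated with the default coercion. -/
lemma app_zero {A B : AddCommGrpCat.{u}} (f : A ⟶ B) : f (0 : A) = 0 :=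
  map_zero f.hom

/-- for a skeletally small exact category `X` (an additive category
equipped with a class `E` of admissible short exact sequences, i.e. kernel-cokernel pairs),
the subcategory `Lex-X` of `Mod-X` consisting of the left exact additive functors `M` —
those sending every admissible short exact sequence `0 → A → B → C` to an exact sequence
`0 → M(A) → M(B) → M(C)` of abelian groups — is definable, i.e. closed under products,
direct limits and pure subobjects. -/
theorem lex_definable (E : Set (AdmissibleSES C)) :
    IsDefinable {M : C ⥤ AddCommGrpCat.{u} | M.Additive ∧ ∀ S ∈ E,
      Function.Injective (M.map S.i) ∧ Function.Exact (M.map S.i) (M.map S.p)} := by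
  refine ⟨fun M hM => hM.1, ?_, ?_, ?_⟩
  · -- closure under products
    rintro ι M hM P hP π ⟨hc⟩
    have hev : ∀ X : C,
        IsLimit (((evaluation C AddCommGrpCat.{u}).obj X ⋙ forget AddCommGrpCat).mapCone
          (Fan.mk P π)) := fun X => isLimitOfPreserves _ hc
    refine ⟨hP, fun S hS => ?_⟩
    constructor
    · intro x y hxy
      apply fan_sections_inj (hev S.A)
      intro i
      show (π i).app S.A x = (π i).app S.A y
      apply ((hM i).2 S hS).1
      calc (M i).map S.i ((π i).app S.A x)
          = (π i).app S.B (P.map S.i x) := (natapp (π i) S.i x).symm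
        _ = (π i).app S.B (P.map S.i y) := by rw [hxy]
        _ = (M i).map S.i ((π i).app S.A y) := natapp (π i) S.i y
    · intro x
      constructor
      · intro hx
        have hxe : ∀ i, ∃ a : (M i).obj S.A, (M i).map S.i a = (π i).app S.B x := by
          intro i
          have h0 : (M i).map S.p ((π i).app S.B x) = 0 := by
            rw [← natapp (π i) S.p x, hx, app_zero]
          exact (((hM i).2 S hS).2 ((π i).app S.B x)).mp h0
        choose a ha using hxe
        obtain ⟨y, hy⟩ := fan_sections_lift (hev S.A) a
        refine ⟨y, ?_⟩
        apply fan_sections_inj (hev S.B)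
        intro i
        show (π i).app S.B (P.map S.i y) = (π i).app S.B x
        rw [natapp (π i) S.i y]
        have hyi : (π i).app S.A y = a i := hy i
        rw [hyi, ha i]
      · rintro ⟨y, rfl⟩
        exact lex_comp_zero P hP S y
  · -- closure under filtered colimits
    rintro J _ _ F hF c hadd hc
    have hev : ∀ X : C,
        IsColimit (((evaluation C AddCommGrpCat.{u}).obj X ⋙ forget AddCommGrpCat).mapCocone c) :=
      fun X => isColimitOfPreserves _ hc
    have hnat : ∀ (j : J) ⦃X Y : C⦄ (f : X ⟶ Y) (z : (F.obj j).obj X),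
        (c.ι.app j).app Y ((F.obj j).map f z) = c.pt.map f ((c.ι.app j).app X z) :=
      fun j X Y f z => natapp (c.ι.app j) f z
    have hw : ∀ {j l : J} (f : j ⟶ l) (X : C) (z : (F.obj j).obj X),
        (c.ι.app l).app X ((F.map f).app X z) = (c.ι.app j).app X z := by
      intro j l f X z
      have h2 := congr_fun (congrArg (fun (t : F.obj j ⟶ c.pt) => (⇑
        (t.app X))) (c.w f)) z
      exact h2
    refine ⟨hadd, fun S hS => ?_⟩
    constructor
    · intro x y hxy
      obtain ⟨j, x', hx'⟩ := Types.jointly_surjective _ (hev S.A) x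
      obtain ⟨k, y', hy'⟩ := Types.jointly_surjective _ (hev S.A) y
      have hx' : (c.ι.app j).app S.A x' = x := hx'
      have hy' : (c.ι.app k).app S.A y' = y := hy'
      have heq : (c.ι.app j).app S.B ((F.obj j).map S.i x')
          = (c.ι.app k).app S.B ((F.obj k).map S.i y') := by
        rw [hnat j S.i x', hnat k S.i y', hx', hy', hxy]
      obtain ⟨l, f, g, hfg⟩ :=
        (Types.FilteredColimit.isColimit_eq_iff _ (hev S.B)
          (xi := (F.obj j).map S.i x') (xj := (F.obj k).map S.i y')).mp heq
      have hfg : (F.map f).app S.B ((F.obj j).map S.i x')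
          = (F.map g).app S.B ((F.obj k).map S.i y') := hfg
      rw [natapp (F.map f) S.i x', natapp (F.map g) S.i y'] at hfg
      have key := ((hF l).2 S hS).1 hfg
      calc x = (c.ι.app l).app S.A ((F.map f).app S.A x') := by rw [hw f S.A x', hx']
        _ = (c.ι.app l).app S.A ((F.map g).app S.A y') := by rw [key]
        _ = y := by rw [hw g S.A y', hy']
    · intro x
      constructor
      · intro hx
        obtain ⟨j, x', hx'⟩ := Types.jointly_surjective _ (hev S.B) x
        have hx' : (c.ι.app j).app S.B x' = x := hx'
        have heq : (c.ι.app j).app S.Cc ((F.obj j).map S.p x')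
            = (c.ι.app j).app S.Cc 0 := by
          rw [hnat j S.p x', hx', hx, app_zero]
        obtain ⟨l, f, g, hfg⟩ :=
          (Types.FilteredColimit.isColimit_eq_iff _ (hev S.Cc)
            (xi := (F.obj j).map S.p x') (xj := (0 : (F.obj j).obj S.Cc))).mp heq
        have hfg : (F.map f).app S.Cc ((F.obj j).map S.p x')
            = (F.map g).app S.Cc 0 := hfg
        rw [natapp (F.map f) S.p x', app_zero] at hfg
        obtain ⟨a, ha⟩ := (((hF l).2 S hS).2 ((F.map f).app S.B x')).mp hfg
        refine ⟨(c.ι.app l).app S.A a, ?_⟩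
        rw [← hnat l S.i a, ha, hw f S.B x', hx']
      · rintro ⟨y, rfl⟩
        exact lex_comp_zero c.pt hadd S y
  · -- closure under pure subobjects
    rintro M N h hM hpure ⟨hN, hNE⟩
    haveI : Mono h := hpure.1
    have happinj : ∀ X : C, Function.Injective (h.app X) := by
      intro X
      exact (AddCommGrpCat.mono_iff_injective _).mp
        (Functor.map_mono ((evaluation C AddCommGrpCat.{u}).obj X) h)
    refine ⟨hM, fun S hS => ?_⟩
    constructor
    · intro a b hab
      apply happinj S.A
      apply (hNE S hS).1
      calc N.map S.i (h.app S.A a)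
          = h.app S.B (M.map S.i a) := (natapp h S.i a).symm
        _ = h.app S.B (M.map S.i b) := by rw [hab]
        _ = N.map S.i (h.app S.A b) := natapp h S.i b
    · intro m
      constructor
      · intro hm
        have h0 : N.map S.p (h.app S.B m) = 0 := by
          rw [← natapp h S.p m, hm, app_zero]
        obtain ⟨n, hn⟩ := ((hNE S hS).2 (h.app S.B m)).mp h0
        exact hpure.2 S.i m ⟨n, hn⟩
      · rintro ⟨y, rfl⟩
        exact lex_comp_zero M hM S y
end
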